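/- arXiv:1708.02606 — 2 statements merged into one kernel-verified Lean document; each statement's English description precedes it below -/
import Mathlib

section
/- Let X be a connected, locally path connected topological space and x₀ ∈ X. Then X is a small loop transfer space at x₀ if and only if for every open neighborhood U of x₀, the subgroup i_*π₁(U, x₀) is open in π₁^{qtop}(X, x₀), where i_* : π₁(U,x₀) → π₁(X,x₀) is induced by the inclusion U → X. -/
open TopologicalSpace

attribute [local instance] Path.Homotopic.setoid

/-- The homotopy class of a loop, as an element of the fundamental group. -/
noncomputable def loopClass {X : Type*} [TopologicalSpace X] {x : X} (γ : Path x x) :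
    FundamentalGroup X x :=
  FundamentalGroup.fromPath (X := TopCat.of X) ⟦γ⟧

/-- `α` is a small loop transfer (SLT) path: for every open neighborhood `U` of `α 0`
there is an open neighborhood `V` of `α 1` such that every loop at `α 1` inside `V` is
path-homotopic to some loop at `α 0` inside `U` conjugated along `α`. -/
def IsSLTPath {X : Type*} [TopologicalSpace X] {x₀ x₁ : X} (α : Path x₀ x₁) : Prop :=
  ∀ U : Set X, IsOpen U → x₀ ∈ U →
    ∃ V : Set X, IsOpen V ∧ x₁ ∈ V ∧
      ∀ γ : Path x₁ x₁, (∀ t, γ t ∈ V) →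
        ∃ γ' : Path x₀ x₀, (∀ t, γ' t ∈ U) ∧
          γ'.Homotopic ((α.trans γ).trans α.symm)

/-- `X` is a small loop transfer space at `x₀`: every path starting at `x₀` is an SLT path. -/
def IsSLTAt (X : Type*) [TopologicalSpace X] (x₀ : X) : Prop :=
  ∀ (x₁ : X) (α : Path x₀ x₁), IsSLTPath α

/-- `X` is SLTL at `x₀`: every loop based at `x₀` is an SLT path. -/
def IsSLTLAt (X : Type*) [TopologicalSpace X] (x₀ : X) : Prop :=
  ∀ γ : Path x₀ x₀, IsSLTPath γ

/-- `X` is SLTP at `x₀`: every non-loop path starting at `x₀` is an SLT path. -/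
def IsSLTPAt (X : Type*) [TopologicalSpace X] (x₀ : X) : Prop :=
  ∀ (x₁ : X) (α : Path x₀ x₁), x₁ ≠ x₀ → IsSLTPath α

/-- The set of homotopy classes of loops based at `x₀` with image contained in `U`;
this is the image `i₊π₁(U, x₀)` of the homomorphism induced by the inclusion `U → X`. -/
noncomputable def loopClassesIn {X : Type*} [TopologicalSpace X] (x₀ : X) (U : Set X) :
    Set (FundamentalGroup X x₀) :=
  { g | ∃ γ : Path x₀ x₀, (∀ t, γ t ∈ U) ∧ g = loopClass γ }

/-- The quotient topology on the fundamental group, coinduced by the map from the loop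
space (with the compact-open topology) sending a loop to its homotopy class. -/
noncomputable def qtop (X : Type*) [TopologicalSpace X] (x₀ : X) :
    TopologicalSpace (FundamentalGroup X x₀) :=
  coinduced (fun γ : Path x₀ x₀ => loopClass γ) inferInstance

/-- The whisker topology on the fundamental group, generated by the basis of cosets
`[α] · i₊π₁(U, x₀)` for `U` an open neighborhood of `x₀`. -/
noncomputable def whTop (X : Type*) [TopologicalSpace X] (x₀ : X) :
    TopologicalSpace (FundamentalGroup X x₀) :=
  generateFrom { S | ∃ (g : FundamentalGroup X x₀) (U : Set X), IsOpen U ∧ x₀ ∈ U ∧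
      S = (fun h => g * h) '' loopClassesIn x₀ U }

/-- A loop based at `x` is small if every open neighborhood of `x` contains a
representative of its homotopy class. -/
def IsSmallLoop {X : Type*} [TopologicalSpace X] {x : X} (γ : Path x x) : Prop :=
  ∀ U : Set X, IsOpen U → x ∈ U →
    ∃ δ : Path x x, (∀ t, δ t ∈ U) ∧ δ.Homotopic γ

/-- `π₁ˢ(X, x)`: the set of homotopy classes of small loops based at `x`. -/
noncomputable def pi1s {X : Type*} [TopologicalSpace X] (x : X) :
    Set (FundamentalGroup X x) :=
  { g | ∃ γ : Path x x, IsSmallLoop γ ∧ g = loopClass γ }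

/-- `π₁ˢᵍ(X, x₀)`: the subgroup generated by classes `[α * β * α⁻¹]` where `α` is a path
starting at `x₀` and `β` is a small loop based at `α 1`. -/
noncomputable def pi1sg {X : Type*} [TopologicalSpace X] (x₀ : X) :
    Subgroup (FundamentalGroup X x₀) :=
  Subgroup.closure { g | ∃ (x₁ : X) (α : Path x₀ x₁) (β : Path x₁ x₁), IsSmallLoop β ∧
      g = loopClass ((α.trans β).trans α.symm) }

/-- The path Spanier group of a path open cover `V` at `x₀`: the subgroup generated by the
classes `[α * β * α⁻¹]` where `α` is a path starting at `x₀` and `β` is a loop based at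
`α 1` with image inside `V α`. -/
noncomputable def pathSpanierGroup {X : Type*} [TopologicalSpace X] (x₀ : X)
    (V : ∀ x₁ : X, Path x₀ x₁ → Set X) : Subgroup (FundamentalGroup X x₀) :=
  Subgroup.closure { g | ∃ (x₁ : X) (α : Path x₀ x₁) (β : Path x₁ x₁),
      (∀ t, β t ∈ V x₁ α) ∧ g = loopClass ((α.trans β).trans α.symm) }

/-- `X` is small "small loop" transfer (SSLT) at `x₀`. -/
def IsSSLTAt (X : Type*) [TopologicalSpace X] (x₀ : X) : Prop :=
  ∀ (x₁ : X) (α : Path x₀ x₁) (U : Set X), IsOpen U → x₀ ∈ U →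
    ∃ V : Set X, IsOpen V ∧ x₁ ∈ V ∧
      ∀ β : Path x₁ x₁, IsSmallLoop β → (∀ t, β t ∈ V) →
        ∃ γ : Path x₀ x₀, (∀ t, γ t ∈ U) ∧
          γ.Homotopic ((α.trans β).trans α.symm)

/-- `X` is semilocally small generated: every point has an open neighborhood `U` with
`i₊π₁(U, x) ≤ π₁ˢᵍ(X, x)`. -/
noncomputable def SemilocallySmallGenerated (X : Type*) [TopologicalSpace X] : Prop :=
  ∀ x : X, ∃ U : Set X, IsOpen U ∧ x ∈ U ∧ loopClassesIn x U ⊆ (pi1sg x : Set (FundamentalGroup X x))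

section SLTHelpers

open CategoryTheory Set unitInterval

attribute [local instance] Path.Homotopic.setoid

variable {Y : Type*} [TopologicalSpace Y]

/-- The homotopy class of a path as a morphism in the fundamental groupoid. -/
noncomputable def pqSLT {a b : Y} (p : Path a b) :
    FundamentalGroupoid.mk a ⟶ FundamentalGroupoid.mk b := ⟦p⟧

lemma pqSLT_trans {a b c : Y} (p : Path a b) (q : Path b c) :
    pqSLT (p.trans q) = pqSLT p ≫ pqSLT q :=
  Path.Homotopic.Quotient.mk_trans p q

lemma pqSLT_symm {a b : Y} (p : Path a b) : pqSLT p.symm = inv (pqSLT p) := by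
  have : pqSLT p.symm = Groupoid.inv (pqSLT p) := rfl
  rw [this, Groupoid.inv_eq_inv]

lemma pqSLT_refl (a : Y) : pqSLT (Path.refl a) = 𝟙 (FundamentalGroupoid.mk a) := rfl

lemma pqSLT_eq_iff {a b : Y} (p q : Path a b) : pqSLT p = pqSLT q ↔ p.Homotopic q :=
  ⟨fun h => Quotient.exact h, fun h => Quotient.sound h⟩

lemma path_cast_rfl_rfl {a b : Y} (p : Path a b) : p.cast rfl rfl = p := by
  ext t; rw [Path.cast_coe]

lemma pqSLT_cast {a b a' b' : Y} (p : Path a b) (hx : a' = a) (hy : b' = b) :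
    pqSLT (p.cast hx hy) = eqToHom (by rw [hx]) ≫ pqSLT p ≫ eqToHom (by rw [hy]) := by
  subst hx; subst hy
  rw [path_cast_rfl_rfl]; simp

lemma loopClass_eq_iff {X : Type*} [TopologicalSpace X] {x : X} (γ δ : Path x x) :
    loopClass γ = loopClass δ ↔ γ.Homotopic δ := by
  constructor
  · intro h
    exact Quotient.exact h
  · intro h
    unfold loopClass
    rw [Quotient.sound h]

lemma master_step {x₀ a b c d : Y} (Λ' : Path x₀ a) (Λ : Path x₀ b) (la : Path a b)
    (M' : Path x₀ c) (M : Path x₀ d) (mu : Path c d) (h' : Path a c) (hh : Path b d)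
    (HΛ : Λ.Homotopic (Λ'.trans la)) (HM : M.Homotopic (M'.trans mu)) :
    ((Λ.trans hh).trans M.symm).Homotopic
      (((Λ'.trans ((((la.trans hh).trans mu.symm).trans h'.symm))).trans Λ'.symm).trans
        ((Λ'.trans h').trans M'.symm)) := by
  rw [← pqSLT_eq_iff] at HΛ HM ⊢
  rw [pqSLT_trans] at HΛ HM
  simp only [pqSLT_trans, pqSLT_symm, HΛ, HM]
  simp

lemma master_rebase_a {x₀ s r : Y} (Λs : Path x₀ s) (Λr : Path x₀ r) (ρ : Path s r)
    (sg : Path r r) (H : Λr.Homotopic (Λs.trans ρ)) :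
    ((Λr.trans sg).trans Λr.symm).Homotopic
      ((Λs.trans ((ρ.trans sg).trans ρ.symm)).trans Λs.symm) := by
  rw [← pqSLT_eq_iff] at H ⊢
  rw [pqSLT_trans] at H
  simp only [pqSLT_trans, pqSLT_symm, H]
  simp

lemma master_rebase_b {x₀ s r : Y} (Λs : Path x₀ s) (Λr : Path x₀ r) (q : Path r s)
    (sg : Path r r) (H : Λs.Homotopic (Λr.trans q)) :
    ((Λr.trans sg).trans Λr.symm).Homotopic
      ((Λs.trans ((q.symm.trans sg).trans q.symm.symm)).trans Λs.symm) := by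
  rw [← pqSLT_eq_iff] at H ⊢
  rw [pqSLT_trans] at H
  simp only [pqSLT_trans, pqSLT_symm, H]
  simp

lemma master_extract {x₀ : Y} (l m : Path x₀ x₀) :
    m.Homotopic (((l.trans m.symm)).symm.trans l) := by
  rw [← pqSLT_eq_iff]
  simp only [pqSLT_trans, pqSLT_symm]
  simp

lemma master_final {x₀ a b : Y} (ea : a = x₀) (eb : b = x₀) (l m : Path x₀ x₀)
    (Λ : Path x₀ a) (hh : Path a b) (M : Path x₀ b)
    (hΛ : Λ = l.cast rfl ea) (hhh : hh = (Path.refl x₀).cast ea eb) (hM : M = m.cast rfl eb) :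
    ((Λ.trans hh).trans M.symm).Homotopic (l.trans m.symm) := by
  subst ea; subst eb
  rw [path_cast_rfl_rfl] at hΛ hhh hM
  subst hΛ; subst hhh; subst hM
  rw [← pqSLT_eq_iff]
  simp only [pqSLT_trans, pqSLT_symm, pqSLT_refl]
  simp

lemma path_eq_cast_const {x₀ a b : Y} (ea : a = x₀) (eb : b = x₀) (p : Path a b)
    (h : ∀ t, p t = x₀) : p = (Path.refl x₀).cast ea eb := by
  subst ea; subst eb
  rw [path_cast_rfl_rfl]
  ext t; exact h t

lemma path_eq_cast_of_forall {x₀ a : Y} (ea : a = x₀) (l : Path x₀ x₀) (p : Path x₀ a)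
    (h : ∀ t, p t = l t) : p = l.cast rfl ea := by
  subst ea
  rw [path_cast_rfl_rfl]
  ext t; exact h t

lemma master_refl_conj {x₀ x₁ : Y} (α : Path x₀ x₁) :
    ((α.trans (Path.refl x₁)).trans α.symm).Homotopic (Path.refl x₀) := by
  rw [← pqSLT_eq_iff]
  simp only [pqSLT_trans, pqSLT_symm, pqSLT_refl]
  simp

lemma truncOfLE_apply {x y : Y} (γ : Path x y) {a b : ℝ} (hab : a ≤ b) (s : I) :
    (γ.truncateOfLE hab) s = γ.extend (min (max (s:ℝ) a) b) := rfl

lemma trunc_glue {x y : Y} (γ : Path x y) {a b c : ℝ} (h0 : 0 ≤ a) (hab : a ≤ b) (hbc : b ≤ c)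
    (hc1 : c ≤ 1) :
    ((γ.truncateOfLE hab).trans (γ.truncateOfLE hbc)).Homotopic
      (γ.truncateOfLE (hab.trans hbc)) := by
  have hb0 : 0 ≤ b := h0.trans hab
  have hb1 : b ≤ 1 := hbc.trans hc1
  have hfmem : ∀ t : I, (if (t:ℝ) ≤ 1/2 then min (2*(t:ℝ)) b else max (2*(t:ℝ)-1) b) ∈ I := by
    intro t
    rcases t.2 with ⟨ht0, ht1⟩
    split_ifs with h
    · exact ⟨le_min (by linarith) hb0, (min_le_right _ _).trans hb1⟩
    · exact ⟨le_max_of_le_right hb0, max_le (by linarith) hb1⟩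
  set f : I → I := fun t => ⟨if (t:ℝ) ≤ 1/2 then min (2*(t:ℝ)) b else max (2*(t:ℝ)-1) b,
    hfmem t⟩ with hf_def
  have hfval : ∀ t : I, (f t : ℝ) = if (t:ℝ) ≤ 1/2 then min (2*(t:ℝ)) b
      else max (2*(t:ℝ)-1) b := fun t => rfl
  have hfc : Continuous f := by
    apply Continuous.subtype_mk
    apply Continuous.if_le
    · exact (continuous_const.mul continuous_subtype_val).min continuous_const
    · exact ((continuous_const.mul continuous_subtype_val).sub continuous_const).max
        continuous_const
    · exact continuous_subtype_val
    · exact continuous_const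
    · intro t ht
      rw [ht]
      norm_num [min_eq_right hb1, max_eq_right hb0]
  have hf0 : f 0 = 0 := by
    ext
    rw [hfval]
    norm_num [min_eq_left hb0]
  have hf1 : f 1 = 1 := by
    ext
    rw [hfval]
    norm_num [max_eq_left hb1]
  have heq : (γ.truncateOfLE hab).trans (γ.truncateOfLE hbc)
      = (γ.truncateOfLE (hab.trans hbc)).reparam f hfc hf0 hf1 := by
    ext t
    have hrep : ((γ.truncateOfLE (hab.trans hbc)).reparam f hfc hf0 hf1) t
        = γ.extend (min (max ((f t):ℝ) a) c) := rfl
    rw [Path.trans_apply, hrep]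
    split_ifs with h
    · rw [truncOfLE_apply]
      rw [hfval t, if_pos h]
      push_cast
      congr 1
      rcases le_total (2*(t:ℝ)) b with h2 | h2
      · rw [min_eq_left h2, min_eq_left (max_le (h2.trans hbc) (hab.trans hbc)),
          min_eq_left (max_le h2 hab)]
      · rw [min_eq_right h2, min_eq_right (le_max_of_le_left h2), max_eq_left hab,
          min_eq_left hbc]
    · rw [truncOfLE_apply]
      rw [hfval t, if_neg h]
      push_cast
      congr 1
      rw [max_eq_left (le_max_of_le_right hab : a ≤ max (2*(t:ℝ)-1) b)]
  rw [heq]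
  exact Path.Homotopic.symm ⟨Path.Homotopy.reparam _ f hfc hf0 hf1⟩

lemma co_nbhd_basis {x₁ : Y} {O : Set C(I, Y)} (hO : IsOpen O)
    (hmem : (ContinuousMap.const I x₁) ∈ O) :
    ∃ V : Set Y, IsOpen V ∧ x₁ ∈ V ∧ ∀ f : C(I, Y), (∀ t, f t ∈ V) → f ∈ O := by
  have h : TopologicalSpace.GenerateOpen
      (image2 (fun K U ↦ {f : C(I,Y) | MapsTo f K U}) {K | IsCompact K} {U | IsOpen U}) O := hO
  induction h with
  | basic S hS =>
    obtain ⟨K, hK, U, hU, rfl⟩ := hS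
    rcases K.eq_empty_or_nonempty with rfl | ⟨k, hk⟩
    · exact ⟨univ, isOpen_univ, mem_univ _, fun f _ => mapsTo_empty _ _⟩
    · refine ⟨U, hU, hmem hk, fun f hf t _ => hf t⟩
  | univ => exact ⟨univ, isOpen_univ, mem_univ _, fun f _ => trivial⟩
  | inter S T hgS hgT ihS ihT =>
    obtain ⟨V₁, hV₁, hx₁, h₁⟩ := ihS hgS hmem.1
    obtain ⟨V₂, hV₂, hx₂, h₂⟩ := ihT hgT hmem.2
    exact ⟨V₁ ∩ V₂, hV₁.inter hV₂, ⟨hx₁, hx₂⟩,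
      fun f hf => ⟨h₁ f fun t => (hf t).1, h₂ f fun t => (hf t).2⟩⟩
  | sUnion S hS ih =>
    obtain ⟨s, hsS, hmems⟩ := hmem
    obtain ⟨V, hV, hx, h⟩ := ih s hsS (hS s hsS) hmems
    exact ⟨V, hV, hx, fun f hf => ⟨s, hsS, h f hf⟩⟩

lemma isOpen_path_mapsTo {x y : Y} {K : Set I} {U : Set Y} (hK : IsCompact K) (hU : IsOpen U) :
    IsOpen {p : Path x y | MapsTo p K U} := by
  have : {p : Path x y | MapsTo p K U}
      = ((↑) : Path x y → C(I, Y)) ⁻¹' {f : C(I, Y) | MapsTo f K U} := rfl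
  rw [this]
  exact (ContinuousMap.isOpen_setOf_mapsTo hK hU).preimage continuous_induced_dom

lemma path_trans_mem {a b c : Y} {p : Path a b} {q : Path b c} {S : Set Y}
    (hp : ∀ t, p t ∈ S) (hq : ∀ t, q t ∈ S) : ∀ t, (p.trans q) t ∈ S := by
  intro t
  rw [Path.trans_apply]
  split_ifs
  · exact hp _
  · exact hq _

lemma path_symm_mem {a b : Y} {p : Path a b} {S : Set Y} (hp : ∀ t, p t ∈ S) :
    ∀ t, p.symm t ∈ S := fun t => hp _

lemma homotopic_cast {a b a' b' : Y} {p q : Path a b} (hx : a' = a) (hy : b' = b)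
    (h : p.Homotopic q) : (p.cast hx hy).Homotopic (q.cast hx hy) := by
  subst hx; subst hy
  rwa [path_cast_rfl_rfl, path_cast_rfl_rfl]

lemma cast_trans_left {a b c a' : Y} (p : Path a b) (q : Path b c) (hx : a' = a) :
    (p.cast hx rfl).trans q = (p.trans q).cast hx rfl := by
  subst hx
  rw [path_cast_rfl_rfl, path_cast_rfl_rfl]

lemma clamp_mem_Icc {a b : ℝ} (hab : a ≤ b) (x : ℝ) : min (max x a) b ∈ Set.Icc a b :=
  ⟨le_min (le_max_right _ _) hab, min_le_right _ _⟩

lemma homotopic_symm₂ {a b : Y} {p q : Path a b} (h : p.Homotopic q) :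
    p.symm.Homotopic q.symm := Nonempty.map (fun F => F.symm₂) h

end SLTHelpers

open Set unitInterval

/-- For a connected, locally path connected space, `X` is SLT at `x₀` iff
`i₊π₁(U, x₀)` is open in `π₁^{qtop}(X, x₀)` for every open neighborhood `U` of `x₀`. -/
theorem slt_iff_openSubgroups {X : Type*} [TopologicalSpace X] [ConnectedSpace X]
    [LocallyPathConnectedSpace X] (x₀ : X) :
    IsSLTAt X x₀ ↔
      ∀ U : Set X, IsOpen U → x₀ ∈ U → @IsOpen (FundamentalGroup X x₀) (qtop X x₀) (loopClassesIn x₀ U) := by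
  constructor
  · intro hSLT U hU hx₀U
    have hopen : IsOpen (loopClass ⁻¹' loopClassesIn x₀ U) := by
      rw [isOpen_iff_forall_mem_open]
      intro l hl
      -- the predicate "is homotopic to a loop in U"
      set P : Path x₀ x₀ → Prop :=
        fun p => ∃ γ' : Path x₀ x₀, (∀ t, γ' t ∈ U) ∧ p.Homotopic γ' with hP_def
      have hPhom : ∀ {p q : Path x₀ x₀}, p.Homotopic q → P q → P p := by
        rintro p q hpq ⟨γ', h1, h2⟩
        exact ⟨γ', h1, hpq.trans h2⟩
      have hPtrans : ∀ {p q : Path x₀ x₀}, P p → P q → P (p.trans q) := by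
        rintro p q ⟨γ₁, h1, h2⟩ ⟨γ₂, h3, h4⟩
        exact ⟨γ₁.trans γ₂, path_trans_mem h1 h3, Path.Homotopic.hcomp h2 h4⟩
      have hPsymm : ∀ {p : Path x₀ x₀}, P p → P p.symm := by
        rintro p ⟨γ', h1, h2⟩
        exact ⟨γ'.symm, path_symm_mem h1, homotopic_symm₂ h2⟩
      have hPl : P l := by
        obtain ⟨γ', h1, h2⟩ := hl
        exact ⟨γ', h1, (loopClass_eq_iff _ _).mp h2⟩
      -- SLT data at every time s
      have key : ∀ s : Icc (0:ℝ) 1, ∃ V : Set X, IsOpen V ∧ l.extend ↑s ∈ V ∧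
          ∀ sg : Path (l.extend ↑s) (l.extend ↑s), (∀ t, sg t ∈ V) →
            P ((((l.truncateOfLE s.2.1).cast l.extend_zero.symm rfl).trans sg).trans
                ((l.truncateOfLE s.2.1).cast l.extend_zero.symm rfl).symm) := by
        intro s
        obtain ⟨V₁, hV₁o, hV₁m, htr⟩ :=
          hSLT (l.extend ↑s) ((l.truncateOfLE s.2.1).cast l.extend_zero.symm rfl) U hU hx₀U
        refine ⟨pathComponentIn V₁ (l.extend ↑s), hV₁o.pathComponentIn _,
          mem_pathComponentIn_self hV₁m, fun sg hsg => ?_⟩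
        obtain ⟨γ', h1, h2⟩ := htr sg (fun t => pathComponentIn_subset (hsg t))
        exact ⟨γ', h1, h2.symm⟩
      choose V hVo hVm hVtr using key
      -- local uniformity radii
      have heta : ∀ s : Icc (0:ℝ) 1, ∃ η > 0, ∀ r : ℝ, |r - ↑s| < η → l.extend r ∈ V s := by
        intro s
        have hop : IsOpen (l.extend ⁻¹' V s) := (hVo s).preimage l.continuous_extend
        rcases Metric.isOpen_iff.mp hop ↑s (hVm s) with ⟨η, hηpos, hball⟩
        exact ⟨η, hηpos, fun r hr => hball (by rwa [Metric.mem_ball, Real.dist_eq])⟩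
      choose η hηpos hη using heta
      -- Lebesgue number
      obtain ⟨δ, hδ, hleb⟩ := lebesgue_number_lemma_of_metric
        (isCompact_Icc : IsCompact (Icc (0:ℝ) 1))
        (fun s : Icc (0:ℝ) 1 => Metric.isOpen_ball (x := (s:ℝ)) (ε := η s))
        (fun r hr => Set.mem_iUnion.mpr ⟨⟨r, hr⟩, Metric.mem_ball_self (hηpos _)⟩)
      obtain ⟨n₀, hn₀⟩ := exists_nat_one_div_lt hδ
      set nn : ℕ := n₀ + 1 with hnn_def
      have hnnpos : (0:ℝ) < nn := by positivity
      have hmesh : 1 / (nn:ℝ) < δ := by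
        rw [hnn_def]
        push_cast
        exact hn₀
      set T : ℕ → ℝ := fun i => (i:ℝ) / nn with hT_def
      have hT0 : ∀ i, 0 ≤ T i := fun i => div_nonneg (Nat.cast_nonneg i) hnnpos.le
      have hTle : ∀ i, T i ≤ T (i + 1) := by
        intro i
        show (i:ℝ)/nn ≤ ((i+1:ℕ):ℝ)/nn
        gcongr
        exact_mod_cast Nat.le_succ i
      have hT1 : ∀ i, i ≤ nn → T i ≤ 1 := by
        intro i hi
        rw [hT_def, div_le_one hnnpos]
        exact_mod_cast hi
      have hTnn : T nn = 1 := div_self hnnpos.ne'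
      have hTzero : T 0 = 0 := by simp [hT_def]
      have hgap : ∀ i, T (i + 1) - T i = 1 / nn := by
        intro i
        rw [hT_def]
        push_cast
        ring
      -- choose the interval centres
      have hcex : ∀ i : ℕ, ∃ s : Icc (0:ℝ) 1, i < nn →
          Icc (T i) (T (i + 1)) ⊆ Metric.ball (s:ℝ) (η s) := by
        intro i
        by_cases hi : i < nn
        · have hmem : T i ∈ Icc (0:ℝ) 1 := ⟨hT0 i, hT1 i hi.le⟩
          obtain ⟨s, hs⟩ := hleb (T i) hmem
          refine ⟨s, fun _ r hr => hs ?_⟩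
          rw [Metric.mem_ball, Real.dist_eq]
          have h1 : r - T i ≤ 1 / nn := by
            have := hgap i
            have := hr.2
            linarith
          have h2 : T i ≤ r := hr.1
          rw [abs_of_nonneg (by linarith)]
          linarith
        · exact ⟨⟨0, by norm_num⟩, fun h => absurd h hi⟩
      choose c hc using hcex
      -- membership of values of l
      have hlmem : ∀ i : ℕ, i < nn → ∀ r : ℝ, r ∈ Icc (T i) (T (i + 1)) →
          l.extend r ∈ V (c i) := by
        intro i hi r hr
        apply hη
        have := hc i hi hr
        rwa [Metric.mem_ball, Real.dist_eq] at this
      -- segment control for rebasing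
      have hseg : ∀ i : ℕ, i < nn → ∀ r : ℝ, r ∈ Icc (T i) (T (i + 1)) →
          ∀ τ : ℝ, τ ∈ Icc (min ((c i):ℝ) r) (max ((c i):ℝ) r) → l.extend τ ∈ V (c i) := by
        intro i hi r hr τ hτ
        apply hη
        have h1 : |r - ((c i):ℝ)| < η (c i) := by
          have := hc i hi hr
          rwa [Metric.mem_ball, Real.dist_eq] at this
        rw [abs_sub_lt_iff] at h1 ⊢
        rcases le_total ((c i):ℝ) r with hcr | hcr
        · rw [min_eq_left hcr, max_eq_right hcr] at hτ
          constructor <;> linarith [hτ.1, hτ.2, h1.1, h1.2]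
        · rw [min_eq_right hcr, max_eq_left hcr] at hτ
          constructor <;> linarith [hτ.1, hτ.2, h1.1, h1.2]
      -- the rebasing tool
      have hrebase : ∀ i : ℕ, i < nn → ∀ r : ℝ, ∀ hr0 : 0 ≤ r, r ∈ Icc (T i) (T (i + 1)) →
          ∀ sg : Path (l.extend r) (l.extend r), (∀ t, sg t ∈ V (c i)) →
            P ((((l.truncateOfLE hr0).cast l.extend_zero.symm rfl).trans sg).trans
                ((l.truncateOfLE hr0).cast l.extend_zero.symm rfl).symm) := by
        intro i hi r hr0 hr sg hsg
        rcases le_total ((c i):ℝ) r with hsr | hrs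
        · set ρ := l.truncateOfLE hsr with hρ_def
          have hρmem : ∀ t, ρ t ∈ V (c i) := by
            intro t
            rw [hρ_def, truncOfLE_apply]
            apply hseg i hi r hr
            rw [min_eq_left hsr, max_eq_right hsr]
            exact clamp_mem_Icc hsr _
          have HΛ : ((l.truncateOfLE hr0).cast l.extend_zero.symm rfl).Homotopic
              (((l.truncateOfLE (c i).2.1).cast l.extend_zero.symm rfl).trans ρ) := by
            rw [cast_trans_left]
            exact homotopic_cast _ _ (trunc_glue l le_rfl (c i).2.1 hsr
              (hr.2.trans (hT1 (i+1) hi))).symm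
          refine hPhom (master_rebase_a _ _ ρ sg HΛ) ?_
          refine hVtr (c i) ((ρ.trans sg).trans ρ.symm) ?_
          exact path_trans_mem (path_trans_mem hρmem hsg) (path_symm_mem hρmem)
        · set q := l.truncateOfLE hrs with hq_def
          have hqmem : ∀ t, q t ∈ V (c i) := by
            intro t
            rw [hq_def, truncOfLE_apply]
            apply hseg i hi r hr
            rw [min_eq_right hrs, max_eq_left hrs]
            exact clamp_mem_Icc hrs _
          have HΛ : ((l.truncateOfLE (c i).2.1).cast l.extend_zero.symm rfl).Homotopic
              (((l.truncateOfLE hr0).cast l.extend_zero.symm rfl).trans q) := by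
            rw [cast_trans_left]
            exact homotopic_cast _ _ (trunc_glue l le_rfl hr0 hrs
              ((c i).2.2)).symm
          refine hPhom (master_rebase_b _ _ q sg HΛ) ?_
          refine hVtr (c i) ((q.symm.trans sg).trans q.symm.symm) ?_
          exact path_trans_mem (path_trans_mem (path_symm_mem hqmem) hsg)
            (path_symm_mem (path_symm_mem hqmem))
      have hTmem : ∀ j : ℕ, j ≤ nn → T j ∈ Icc (0:ℝ) 1 := fun j hj => ⟨hT0 j, hT1 j hj⟩
      have hText : ∀ j : ℕ, nn ≤ j → 1 ≤ T j := by
        intro j hj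
        rw [hT_def, le_div_iff₀ hnnpos, one_mul]
        exact_mod_cast hj
      -- junction target sets
      set Z : ℕ → Set X := fun j => pathComponentIn (V (c (j - 1)) ∩ V (c j)) (l.extend (T j))
        with hZ_def
      have hZopen : ∀ j, IsOpen (Z j) := fun j =>
        ((hVo _).inter (hVo _)).pathComponentIn _
      have hZl : ∀ j, j < nn → l.extend (T j) ∈ V (c (j - 1)) ∩ V (c j) := by
        intro j hj
        refine ⟨?_, hlmem j hj (T j) ⟨le_rfl, hTle j⟩⟩
        rcases Nat.eq_zero_or_pos j with rfl | hj1
        · exact hlmem 0 hj (T 0) ⟨le_rfl, hTle 0⟩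
        · have hj1n : j - 1 < nn := lt_of_le_of_lt (Nat.sub_le _ _) hj
          have hjj : (j - 1) + 1 = j := Nat.succ_pred_eq_of_pos hj1
          refine hlmem (j-1) hj1n (T j) ⟨?_, ?_⟩
          · exact hjj ▸ hTle (j-1)
          · rw [hjj]
      have hZlmem : ∀ j, j < nn → l.extend (T j) ∈ Z j := fun j hj =>
        mem_pathComponentIn_self (hZl j hj)
      -- time subintervals and subdivision points
      set K : ℕ → Set I := fun i => {t : I | (t:ℝ) ∈ Icc (T i) (T (i+1))} with hK_def
      have hKcomp : ∀ i, IsCompact (K i) :=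
        fun i => (isClosed_Icc.preimage continuous_subtype_val).isCompact
      set tI : ℕ → I := fun j => ⟨min (T j) 1, le_min (hT0 j) zero_le_one, min_le_right _ _⟩
        with htI_def
      have htIval : ∀ j, j ≤ nn → ((tI j):ℝ) = T j := by
        intro j hj
        show min (T j) 1 = T j
        exact min_eq_left (hT1 j hj)
      -- the neighborhood of l
      refine ⟨⋂ i ∈ Finset.range nn, ({p : Path x₀ x₀ | MapsTo p (K i) (V (c i))} ∩
        {p : Path x₀ x₀ | p (tI i) ∈ Z i}), ?_, ?_, ?_⟩
      · -- the neighborhood is contained in the preimage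
        intro mm hmmN
        have hmm' := Set.mem_iInter₂.mp hmmN
        have hmK : ∀ i, i < nn → MapsTo mm (K i) (V (c i)) :=
          fun i hi => (hmm' i (Finset.mem_range.mpr hi)).1
        have hmZ : ∀ i, i < nn → mm (tI i) ∈ Z i :=
          fun i hi => (hmm' i (Finset.mem_range.mpr hi)).2
        have hmmem : ∀ i, i < nn → ∀ r, r ∈ Icc (T i) (T (i+1)) → mm.extend r ∈ V (c i) := by
          intro i hi r hr
          have hr01 : r ∈ Icc (0:ℝ) 1 := ⟨(hT0 i).trans hr.1, hr.2.trans (hT1 (i+1) hi)⟩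
          have : mm.extend r = mm ⟨r, hr01⟩ := mm.extend_extends' ⟨r, hr01⟩
          rw [this]
          exact hmK i hi hr
        -- junction connecting paths
        have hhex : ∀ j : ℕ, ∃ p : Path (l.extend (T j)) (mm.extend (T j)),
            (1 ≤ j → j < nn → ∀ t, p t ∈ V (c (j-1)) ∩ V (c j)) ∧
            ((j = 0 ∨ nn ≤ j) → ∀ t, p t = x₀) := by
          intro j
          rcases Nat.eq_zero_or_pos j with rfl | hj1
          · have e1 : l.extend (T 0) = x₀ := by rw [hTzero, l.extend_zero]
            have e2 : mm.extend (T 0) = x₀ := by rw [hTzero, mm.extend_zero]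
            refine ⟨(Path.refl x₀).cast e1 e2, fun h1 => absurd h1 (by norm_num), fun _ t => ?_⟩
            show ((Path.refl x₀).cast e1 e2) t = x₀
            have := congrFun (Path.cast_coe (Path.refl x₀) e1 e2) t
            rw [this]
            rfl
          · by_cases hjn : j < nn
            · have htj : ((tI j):ℝ) = T j := htIval j hjn.le
              have hmmtj : mm (tI j) = mm.extend (T j) := by
                rw [← mm.extend_extends' (tI j), htj]
              have hJ : JoinedIn (V (c (j-1)) ∩ V (c j)) (l.extend (T j)) (mm.extend (T j)) := by
                rw [← hmmtj]
                exact hmZ j hjn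
              obtain ⟨p, hp⟩ := hJ
              refine ⟨p, fun _ _ => hp, fun hor => ?_⟩
              rcases hor with h0 | hge
              · omega
              · exact absurd hge (not_le.mpr hjn)
            · have hge : nn ≤ j := le_of_not_gt hjn
              have e1 : l.extend (T j) = x₀ := l.extend_of_one_le (hText j hge)
              have e2 : mm.extend (T j) = x₀ := mm.extend_of_one_le (hText j hge)
              refine ⟨(Path.refl x₀).cast e1 e2, fun _ h2 => absurd h2 hjn, fun _ t => ?_⟩
              show ((Path.refl x₀).cast e1 e2) t = x₀
              have := congrFun (Path.cast_coe (Path.refl x₀) e1 e2) t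
              rw [this]
              rfl
        choose h hmem1 hconst using hhex
        -- the key induction along the subdivision
        have hind : ∀ j : ℕ, j ≤ nn →
            P ((((l.truncateOfLE (hT0 j)).cast l.extend_zero.symm rfl).trans (h j)).trans
                ((mm.truncateOfLE (hT0 j)).cast mm.extend_zero.symm rfl).symm) := by
          intro j
          induction j with
          | zero =>
            intro _
            have v1 : ∀ t : I, ((l.truncateOfLE (hT0 0)).cast l.extend_zero.symm rfl) t = x₀ := by
              intro t
              show l.extend (min (max (t:ℝ) 0) (T 0)) = x₀
              rw [hTzero, min_eq_right (le_max_right _ _), l.extend_zero]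
            have v2 : ∀ t : I, ((mm.truncateOfLE (hT0 0)).cast mm.extend_zero.symm rfl) t = x₀ := by
              intro t
              show mm.extend (min (max (t:ℝ) 0) (T 0)) = x₀
              rw [hTzero, min_eq_right (le_max_right _ _), mm.extend_zero]
            have v3 : ∀ t, h 0 t = x₀ := hconst 0 (Or.inl rfl)
            have hval : ∀ t, ((((l.truncateOfLE (hT0 0)).cast l.extend_zero.symm rfl).trans
                (h 0)).trans
                ((mm.truncateOfLE (hT0 0)).cast mm.extend_zero.symm rfl).symm) t
                  ∈ ({x₀} : Set X) := by
              refine path_trans_mem (path_trans_mem ?_ ?_) (path_symm_mem ?_) <;>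
                intro t <;> simp only [Set.mem_singleton_iff]
              exacts [v1 t, v3 t, v2 t]
            have heq : ((((l.truncateOfLE (hT0 0)).cast l.extend_zero.symm rfl).trans
                (h 0)).trans
                ((mm.truncateOfLE (hT0 0)).cast mm.extend_zero.symm rfl).symm) = Path.refl x₀ := by
              ext t
              exact hval t
            exact ⟨Path.refl x₀, fun _ => hx₀U, by rw [heq]⟩
          | succ j ih =>
            intro hj1
            have hj : j < nn := hj1
            have ihP := ih (Nat.le_of_succ_le hj1)
            have HΛ : ((l.truncateOfLE (hT0 (j+1))).cast l.extend_zero.symm rfl).Homotopic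
                (((l.truncateOfLE (hT0 j)).cast l.extend_zero.symm rfl).trans
                  (l.truncateOfLE (hTle j))) := by
              rw [cast_trans_left]
              exact homotopic_cast _ _
                (trunc_glue l le_rfl (hT0 j) (hTle j) (hT1 (j+1) hj1)).symm
            have HM : ((mm.truncateOfLE (hT0 (j+1))).cast mm.extend_zero.symm rfl).Homotopic
                (((mm.truncateOfLE (hT0 j)).cast mm.extend_zero.symm rfl).trans
                  (mm.truncateOfLE (hTle j))) := by
              rw [cast_trans_left]
              exact homotopic_cast _ _
                (trunc_glue mm le_rfl (hT0 j) (hTle j) (hT1 (j+1) hj1)).symm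
            have hstep := master_step _ _ (l.truncateOfLE (hTle j)) _ _
              (mm.truncateOfLE (hTle j)) (h j) (h (j+1)) HΛ HM
            have hx₀Vj : x₀ ∈ V (c j) → True := fun _ => trivial
            have hend : l.extend (T (j+1)) ∈ V (c j) := hlmem j hj _ ⟨hTle j, le_rfl⟩
            have hstart : l.extend (T j) ∈ V (c j) := hlmem j hj _ ⟨le_rfl, hTle j⟩
            have hσ : ∀ t, ((((l.truncateOfLE (hTle j)).trans (h (j+1))).trans
                (mm.truncateOfLE (hTle j)).symm).trans (h j).symm) t ∈ V (c j) := by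
              refine path_trans_mem (path_trans_mem (path_trans_mem ?_ ?_)
                (path_symm_mem ?_)) (path_symm_mem ?_)
              · intro t
                rw [truncOfLE_apply]
                exact hlmem j hj _ (clamp_mem_Icc (hTle j) _)
              · intro t
                rcases lt_or_ge (j+1) nn with hlt | hge
                · exact (hmem1 (j+1) (Nat.le_add_left 1 j) hlt t).1
                · have e : l.extend (T (j+1)) = x₀ := l.extend_of_one_le (hText (j+1) hge)
                  rw [hconst (j+1) (Or.inr hge) t, ← e]
                  exact hend
              · intro t
                rw [truncOfLE_apply]
                exact hmmem j hj _ (clamp_mem_Icc (hTle j) _)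
              · intro t
                rcases Nat.eq_zero_or_pos j with rfl | hj0
                · rw [hconst 0 (Or.inl rfl) t]
                  have e : l.extend (T 0) = x₀ := by rw [hTzero, l.extend_zero]
                  rw [← e]
                  exact hstart
                · exact (hmem1 j hj0 hj t).2
            have hD := hrebase j hj (T j) (hT0 j) ⟨le_rfl, hTle j⟩ _ hσ
            exact hPhom hstep (hPtrans hD ihP)
        -- conclusion
        have hPn := hind nn le_rfl
        have ea : l.extend (T nn) = x₀ := l.extend_of_one_le hTnn.ge
        have eb : mm.extend (T nn) = x₀ := mm.extend_of_one_le hTnn.ge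
        have hΛeq : (l.truncateOfLE (hT0 nn)).cast l.extend_zero.symm rfl = l.cast rfl ea := by
          refine path_eq_cast_of_forall ea l _ fun t => ?_
          show l.extend (min (max (t:ℝ) 0) (T nn)) = l t
          rw [hTnn, max_eq_left t.2.1, min_eq_left t.2.2]
          exact l.extend_extends' t
        have hMeq : (mm.truncateOfLE (hT0 nn)).cast mm.extend_zero.symm rfl = mm.cast rfl eb := by
          refine path_eq_cast_of_forall eb mm _ fun t => ?_
          show mm.extend (min (max (t:ℝ) 0) (T nn)) = mm t
          rw [hTnn, max_eq_left t.2.1, min_eq_left t.2.2]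
          exact mm.extend_extends' t
        have hheq : h nn = (Path.refl x₀).cast ea eb :=
          path_eq_cast_const ea eb (h nn) (hconst nn (Or.inr le_rfl))
        have hfin := master_final ea eb l mm _ _ _ hΛeq hheq hMeq
        have hPlm : P (l.trans mm.symm) := hPhom hfin.symm hPn
        have hPm : P mm := hPhom (master_extract l mm) (hPtrans (hPsymm hPlm) hPl)
        obtain ⟨γ', h1, h2⟩ := hPm
        exact ⟨γ', h1, (loopClass_eq_iff _ _).mpr h2⟩
      · -- openness
        refine isOpen_biInter_finset fun i hi => ?_
        refine (isOpen_path_mapsTo (hKcomp i) (hVo (c i))).inter ?_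
        have : {p : Path x₀ x₀ | p (tI i) ∈ Z i}
            = {p : Path x₀ x₀ | MapsTo p {tI i} (Z i)} := by
          ext p
          simp [Set.mapsTo_singleton]
        rw [this]
        exact isOpen_path_mapsTo isCompact_singleton (hZopen i)
      · -- l belongs to the neighborhood
        refine Set.mem_iInter₂.mpr fun i hi => ⟨?_, ?_⟩
        · intro t ht
          have : l t = l.extend ↑t := (l.extend_extends' t).symm
          rw [this]
          exact hlmem i (Finset.mem_range.mp hi) ↑t ht
        · have hi' := Finset.mem_range.mp hi
          have heval : l (tI i) = l.extend (T i) := by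
            rw [← l.extend_extends' (tI i), htIval i hi'.le]
          show l (tI i) ∈ Z i
          rw [heval]
          exact hZlmem i hi'
    rw [qtop]
    rwa [isOpen_coinduced]
  · intro hOpen x₁ α U hU hx₀U
    have hH := hOpen U hU hx₀U
    have hW : IsOpen (loopClass ⁻¹' loopClassesIn x₀ U) := isOpen_coinduced.mp hH
    have hT : Continuous fun g : Path x₁ x₁ => (α.trans g).trans α.symm :=
      (continuous_const.path_trans continuous_id).path_trans continuous_const
    have hWT : IsOpen ((fun g : Path x₁ x₁ => (α.trans g).trans α.symm) ⁻¹'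
        (loopClass ⁻¹' loopClassesIn x₀ U)) := hW.preimage hT
    have hreflmem : Path.refl x₁ ∈ (fun g : Path x₁ x₁ => (α.trans g).trans α.symm) ⁻¹'
        (loopClass ⁻¹' loopClassesIn x₀ U) := by
      refine ⟨Path.refl x₀, fun t => hx₀U, ?_⟩
      exact (loopClass_eq_iff _ _).mpr (master_refl_conj α)
    obtain ⟨O, hO, hOeq⟩ := isOpen_induced_iff.mp hWT
    have hconstO : (ContinuousMap.const unitInterval x₁) ∈ O := by
      have : ((Path.refl x₁ : Path x₁ x₁) : C(I, X)) ∈ O := by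
        rw [← Set.mem_preimage, hOeq]
        exact hreflmem
      exact this
    obtain ⟨V, hVopen, hx₁V, hV⟩ := co_nbhd_basis hO hconstO
    refine ⟨V, hVopen, hx₁V, fun γ hγ => ?_⟩
    have : γ ∈ (fun g : Path x₁ x₁ => (α.trans g).trans α.symm) ⁻¹'
        (loopClass ⁻¹' loopClassesIn x₀ U) := by
      rw [← hOeq]
      exact hV _ hγ
    obtain ⟨γ', hγ'U, hEq⟩ := this
    exact ⟨γ', hγ'U, ((loopClass_eq_iff _ _).mp hEq).symm⟩
end

section
/- Let X be a topological space and x₀ ∈ X such that every subgroup of π₁(X, x₀) is a normal subgroup. If there exists a loop based at x₀ in X that is an SLT path, then π₁^{wh}(X, x₀) is a topological group. -/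
open TopologicalSpace

attribute [local instance] Path.Homotopic.setoid

-- auxiliary lemmas
open CategoryTheory in
lemma loopClass_trans' {X : Type*} [TopologicalSpace X] {x : X} (γ δ : Path x x) :
    loopClass (γ.trans δ) = loopClass δ * loopClass γ := by
  rw [FundamentalGroup.mul_def]; rfl

open CategoryTheory in
lemma loopClass_symm' {X : Type*} [TopologicalSpace X] {x : X} (γ : Path x x) :
    loopClass γ.symm = (loopClass γ)⁻¹ := by
  rw [FundamentalGroup.inv_def]; rfl

open CategoryTheory in
lemma loopClass_refl' {X : Type*} [TopologicalSpace X] {x : X} :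
    loopClass (Path.refl x) = (1 : FundamentalGroup X x) := by
  rfl

open CategoryTheory in
/-- `loopClassesIn x₀ U` as a subgroup. -/
noncomputable def loopSubgroup {X : Type*} [TopologicalSpace X] (x₀ : X) (U : Set X)
    (hU : x₀ ∈ U) : Subgroup (FundamentalGroup X x₀) where
  carrier := loopClassesIn x₀ U
  one_mem' := ⟨Path.refl x₀, fun _ => hU, loopClass_refl'.symm⟩
  mul_mem' := by
    rintro a b ⟨γ, hγ, rfl⟩ ⟨δ, hδ, rfl⟩
    refine ⟨δ.trans γ, ?_, (loopClass_trans' δ γ).symm⟩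
    intro t
    rw [Path.trans_apply]
    split_ifs <;> [exact hδ _; exact hγ _]
  inv_mem' := by
    rintro a ⟨γ, hγ, rfl⟩
    exact ⟨γ.symm, fun t => hγ _, (loopClass_symm' γ).symm⟩

open CategoryTheory in
/-- If every subgroup of `π₁(X, x₀)` is normal and there exists an SLT loop
based at `x₀`, then `π₁^{wh}(X, x₀)` is a topological group. -/
theorem wh_topologicalGroup_of_normal_subgroups_of_exists_sltLoop {X : Type*}
    [TopologicalSpace X] (x₀ : X)
    (hnormal : ∀ H : Subgroup (FundamentalGroup X x₀), H.Normal)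
    (hloop : ∃ γ : Path x₀ x₀, IsSLTPath γ) :
    @IsTopologicalGroup (FundamentalGroup X x₀) (whTop X x₀) _ := by
  clear hloop
  letI t := whTop X x₀
  have hbasic : ∀ (g : FundamentalGroup X x₀) (U : Set X), IsOpen U → x₀ ∈ U →
      @IsOpen _ t ((fun h => g * h) '' loopClassesIn x₀ U) := fun g U hUo hU =>
    TopologicalSpace.GenerateOpen.basic _ ⟨g, U, hUo, hU, rfl⟩
  have hconj : ∀ (U : Set X) (hU : x₀ ∈ U) (b l : FundamentalGroup X x₀),
      l ∈ loopClassesIn x₀ U → b * l * b⁻¹ ∈ loopClassesIn x₀ U := by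
    intro U hU b l hl
    exact (hnormal (loopSubgroup x₀ U hU)).conj_mem l hl b
  refine { toContinuousMul := ⟨?_⟩, toContinuousInv := ⟨?_⟩ }
  · -- continuous mul
    apply continuous_generateFrom_iff.mpr
    rintro S ⟨g, U, hUo, hU, rfl⟩
    rw [isOpen_prod_iff]
    rintro a b ⟨l₀, hl₀, hab⟩
    refine ⟨(fun h => a * h) '' loopClassesIn x₀ U, (fun h => b * h) '' loopClassesIn x₀ U,
      hbasic a U hUo hU, hbasic b U hUo hU,
      ⟨1, (loopSubgroup x₀ U hU).one_mem, mul_one a⟩,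
      ⟨1, (loopSubgroup x₀ U hU).one_mem, mul_one b⟩, ?_⟩
    rintro ⟨a', b'⟩ ⟨⟨l₁, hl₁, rfl⟩, ⟨l₂, hl₂, rfl⟩⟩
    refine ⟨l₀ * (b⁻¹ * l₁ * b) * l₂, ?_, ?_⟩
    · exact (loopSubgroup x₀ U hU).mul_mem
        ((loopSubgroup x₀ U hU).mul_mem hl₀
          (by have h := hconj U hU b⁻¹ l₁ hl₁; rw [inv_inv] at h; exact h)) hl₂
    · show g * _ = a * l₁ * (b * l₂)
      have hab' : a * b = g * l₀ := hab.symm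
      calc g * (l₀ * (b⁻¹ * l₁ * b) * l₂) = g * l₀ * (b⁻¹ * l₁ * b) * l₂ := by group
        _ = a * b * (b⁻¹ * l₁ * b) * l₂ := by rw [hab']
        _ = a * l₁ * (b * l₂) := by group
  · -- continuous inv
    apply continuous_generateFrom_iff.mpr
    rintro S ⟨g, U, hUo, hU, rfl⟩
    have : (fun h : FundamentalGroup X x₀ => h⁻¹) ⁻¹' ((fun h => g * h) '' loopClassesIn x₀ U)
        = (fun h => g⁻¹ * h) '' loopClassesIn x₀ U := by
      ext h
      constructor
      · rintro ⟨l, hl, hgl⟩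
        refine ⟨g * l⁻¹ * g⁻¹, hconj U hU g l⁻¹ ((loopSubgroup x₀ U hU).inv_mem hl), ?_⟩
        have hgl' : g * l = h⁻¹ := hgl
        have : h = (g * l)⁻¹ := by rw [hgl']; simp
        rw [this]; group
      · rintro ⟨l, hl, rfl⟩
        have hm : g⁻¹ * l⁻¹ * g ∈ loopClassesIn x₀ U := by
          simpa using hconj U hU g⁻¹ l⁻¹ ((loopSubgroup x₀ U hU).inv_mem hl)
        refine ⟨g⁻¹ * l⁻¹ * g, hm, ?_⟩
        show g * _ = (g⁻¹ * l)⁻¹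
        group
    rw [this]
    exact hbasic g⁻¹ U hUo hU
end
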